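/- Let I be a nonempty finite index set and let (x_i, g_i, f_i) for i ∈ I be triples with x_i, g_i ∈ ℝ^d and f_i ∈ ℝ satisfying f_i ≥ f_j + ⟨g_j, x_i − x_j⟩ for all i, j ∈ I. Then the function f : ℝ^d → ℝ defined by f(x) = max_{j ∈ I} ( f_j + ⟨g_j, x − x_j⟩ ) is convex, satisfies f(x_i) = f_i for every i ∈ I, and g_i is a subgradient of f at x_i for every i ∈ I. -/

import Mathlib

open scoped RealInnerProductSpace

/-- The explicit piecewise-linear interpolating function from the sufficiency part of
Theorem 1 of the paper: under the subgradient inequalities between the data points,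
`F y = max_j (f j + ⟪g j, y - x j⟫)` is convex, interpolates the function values,
and admits `g i` as a subgradient at `x i`. -/
theorem convex_interpolation_construction {d : ℕ} {ι : Type*} [Fintype ι] [Nonempty ι]
    (x g : ι → EuclideanSpace ℝ (Fin d)) (fv : ι → ℝ)
    (h : ∀ i j, fv i ≥ fv j + ⟪g j, x i - x j⟫) :
    ConvexOn ℝ Set.univ
        (fun y : EuclideanSpace ℝ (Fin d) =>
          Finset.univ.sup' Finset.univ_nonempty (fun j => fv j + ⟪g j, y - x j⟫)) ∧
      (∀ i, (Finset.univ.sup' Finset.univ_nonempty (fun j => fv j + ⟪g j, x i - x j⟫)) = fv i) ∧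
      (∀ i, ∀ y : EuclideanSpace ℝ (Fin d),
        Finset.univ.sup' Finset.univ_nonempty (fun j => fv j + ⟪g j, y - x j⟫) ≥
          Finset.univ.sup' Finset.univ_nonempty (fun j => fv j + ⟪g j, x i - x j⟫)
            + ⟪g i, y - x i⟫) := by
  have hinterp : ∀ i,
      (Finset.univ.sup' Finset.univ_nonempty (fun j => fv j + ⟪g j, x i - x j⟫)) = fv i := by
    intro i
    apply le_antisymm
    · exact Finset.sup'_le _ _ fun j _ => h i j
    · have := Finset.le_sup' (fun j => fv j + ⟪g j, x i - x j⟫) (Finset.mem_univ i)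
      simp only [sub_self, inner_zero_right, add_zero] at this; exact this
  refine ⟨?_, hinterp, ?_⟩
  · constructor
    · exact convex_univ
    · intro y _ z _ a b ha hb hab
      apply Finset.sup'_le
      intro j _
      have key : fv j + ⟪g j, (a • y + b • z) - x j⟫
          = a * (fv j + ⟪g j, y - x j⟫) + b * (fv j + ⟪g j, z - x j⟫) := by
        have hx : (a • y + b • z) - x j = a • (y - x j) + b • (z - x j) := by
          rw [smul_sub, smul_sub]
          rw [show a • y + b • z - x j = a • y + b • z - (1:ℝ) • x j by simp, ← hab]
          module
        rw [hx, inner_add_right, real_inner_smul_right, real_inner_smul_right]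
        have hb2 : b = 1 - a := by linarith
        subst hb2; ring
      rw [key]
      have ly := Finset.le_sup' (fun j => fv j + ⟪g j, y - x j⟫) (Finset.mem_univ j)
      have lz := Finset.le_sup' (fun j => fv j + ⟪g j, z - x j⟫) (Finset.mem_univ j)
      simp only [smul_eq_mul]
      exact add_le_add (mul_le_mul_of_nonneg_left ly ha) (mul_le_mul_of_nonneg_left lz hb)
  · intro i y
    rw [hinterp i]
    have := Finset.le_sup' (fun j => fv j + ⟪g j, y - x j⟫) (Finset.mem_univ i)
    exact this
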